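/- In a two-agent setting (n = 2) with U ⊆ ℝ² closed and convex: if a sequence (uᵏ) in U converges to u ∈ U, and each uᵏ maximizes some strictly positive linear functional ⟨φᵏ, ·⟩ over U, then u is Pareto optimal in U. -/

import Mathlib

open Classical

noncomputable def dotp {n : ℕ} (φ u : Fin n → ℝ) : ℝ := ∑ i, φ i * u i

def Pareto {n : ℕ} (U : Set (Fin n → ℝ)) (u : Fin n → ℝ) : Prop :=
  u ∈ U ∧ ∀ v ∈ U, (∀ i, u i ≤ v i) → v = u

def dc {n : ℕ} (U : Set (Fin n → ℝ)) : Set (Fin n → ℝ) :=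
  {x | ∃ u ∈ U, ∀ i, x i ≤ u i}

def IsFace {n : ℕ} (U F : Set (Fin n → ℝ)) : Prop :=
  F.Nonempty ∧ F ⊆ U ∧ Convex ℝ F ∧
    ∀ v ∈ U, ∀ w ∈ U, ∀ α : ℝ, 0 < α → α < 1 →
      α • v + (1 - α) • w ∈ F → v ∈ F ∧ w ∈ F

noncomputable def seqSet {n : ℕ} (U : Set (Fin n → ℝ)) (φ : ℕ → (Fin n → ℝ)) :
    ℕ → Set (Fin n → ℝ)
  | 0 => U
  | t + 1 => {x ∈ seqSet U φ t | ∀ y ∈ seqSet U φ t, dotp (φ t) y ≤ dotp (φ t) x}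

def DownClosedIn {n : ℕ} (U : Set (Fin n → ℝ)) (J : Set (Fin n)) : Prop :=
  ∀ u ∈ U, ∀ τ : ℝ, 0 ≤ τ → ∀ K ⊆ J,
    (fun i => if i ∈ K then u i - τ else u i) ∈ U

def IsPolyhedron {n : ℕ} (P : Set (Fin n → ℝ)) : Prop :=
  ∃ (m : ℕ) (a : Fin m → (Fin n → ℝ)) (b : Fin m → ℝ),
    P = {x | ∀ i, (∑ j, a i j * x j) ≤ b i}

def NormalCone {n : ℕ} (U : Set (Fin n → ℝ)) (u : Fin n → ℝ) : Set (Fin n → ℝ) :=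
  {φ | ∀ v ∈ U, dotp φ v ≤ dotp φ u}

def riE {n : ℕ} (G : Set (Fin n → ℝ)) : Set (Fin n → ℝ) :=
  {u ∈ G | ∀ u' ∈ G, ∃ lam : ℝ, 0 < lam ∧ u + lam • (u - u') ∈ G}


lemma dotp_two (i j : Fin 2) (hij : i ≠ j) (ph x : Fin 2 → ℝ) :
    dotp ph x = ph i * x i + ph j * x j := by
  fin_cases i <;> fin_cases j <;>
    simp_all [dotp, Fin.sum_univ_two] <;> ring

lemma coord_le (U : Set (Fin 2 → ℝ))
    (uk : ℕ → (Fin 2 → ℝ)) (huk : ∀ k, uk k ∈ U)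
    (φ : ℕ → (Fin 2 → ℝ)) (hφ : ∀ k, ∀ i, 0 < φ k i)
    (hmax : ∀ k, ∀ v ∈ U, dotp (φ k) v ≤ dotp (φ k) (uk k))
    (u : Fin 2 → ℝ) (huU : u ∈ U)
    (hlim : Filter.Tendsto uk Filter.atTop (nhds u))
    (i j : Fin 2) (hij : i ≠ j)
    (v : Fin 2 → ℝ) (hv : v ∈ U) (hle : ∀ i, u i ≤ v i) :
    v i ≤ u i := by
  by_contra hlt
  push_neg at hlt
  set s : ℕ → ℝ := fun k => φ k i + φ k j with hs_def
  have hs : ∀ k, 0 < s k := fun k => add_pos (hφ k i) (hφ k j)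
  set ψi : ℕ → ℝ := fun k => φ k i / s k with hψi_def
  set ψj : ℕ → ℝ := fun k => φ k j / s k with hψj_def
  have hψsum : ∀ k, ψi k + ψj k = 1 := by
    intro k
    have := (hs k).ne'
    show φ k i / s k + φ k j / s k = 1
    rw [← add_div]
    exact (div_eq_one_iff_eq this).mpr rfl
  have hmem : ∀ k, ψi k ∈ Set.Icc (0:ℝ) 1 := by
    intro k
    constructor
    · exact div_nonneg (hφ k i).le (hs k).le
    · rw [div_le_one (hs k)]
      have := (hφ k j).le
      simp only [hs_def]
      linarith
  obtain ⟨a, ha, g, hg, hga⟩ :=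
    (isCompact_Icc (a := (0:ℝ)) (b := 1)).tendsto_subseq hmem
  have hgaj : Filter.Tendsto (fun k => ψj (g k)) Filter.atTop (nhds (1 - a)) := by
    have : (fun k => ψj (g k)) = fun k => 1 - ψi (g k) := by
      funext k
      have := hψsum (g k)
      linarith
    rw [this]
    exact Filter.Tendsto.const_sub _ hga
  have hcoord : ∀ m : Fin 2,
      Filter.Tendsto (fun k => uk k m) Filter.atTop (nhds (u m)) := by
    intro m
    exact (tendsto_pi_nhds.mp hlim) m
  have hineq : ∀ k, ∀ w ∈ U,
      ψi k * w i + ψj k * w j ≤ ψi k * uk k i + ψj k * uk k j := by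
    intro k w hw
    have h1 := hmax k w hw
    rw [dotp_two i j hij, dotp_two i j hij] at h1
    have h2 : (φ k i * w i + φ k j * w j) / s k ≤
        (φ k i * uk k i + φ k j * uk k j) / s k :=
      by gcongr; exact (hs k).le
    have e1 : ψi k * w i + ψj k * w j = (φ k i * w i + φ k j * w j) / s k := by
      simp only [hψi_def, hψj_def]; ring
    have e2 : ψi k * uk k i + ψj k * uk k j =
        (φ k i * uk k i + φ k j * uk k j) / s k := by
      simp only [hψi_def, hψj_def]; ring
    rw [e1, e2]
    exact h2
  have hA : ∀ w ∈ U, a * w i + (1 - a) * w j ≤ a * u i + (1 - a) * u j := by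
    intro w hw
    have hL : Filter.Tendsto (fun k => ψi (g k) * w i + ψj (g k) * w j)
        Filter.atTop (nhds (a * w i + (1 - a) * w j)) :=
      ((hga.mul tendsto_const_nhds).add (hgaj.mul tendsto_const_nhds))
    have hRi : Filter.Tendsto (fun k => uk (g k) i) Filter.atTop (nhds (u i)) :=
      (hcoord i).comp hg.tendsto_atTop
    have hRj : Filter.Tendsto (fun k => uk (g k) j) Filter.atTop (nhds (u j)) :=
      (hcoord j).comp hg.tendsto_atTop
    have hR : Filter.Tendsto (fun k => ψi (g k) * uk (g k) i + ψj (g k) * uk (g k) j)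
        Filter.atTop (nhds (a * u i + (1 - a) * u j)) :=
      ((hga.mul hRi).add (hgaj.mul hRj))
    exact le_of_tendsto_of_tendsto' hL hR (fun k => hineq (g k) w hw)
  have ha0 : 0 ≤ a := ha.1
  have ha1 : a ≤ 1 := ha.2
  have hdi : 0 < v i - u i := by linarith
  have hdj : 0 ≤ v j - u j := by linarith [hle j]
  have hAv := hA v hv
  have haz : a = 0 := by nlinarith
  have hwj : ∀ w ∈ U, w j ≤ u j := by
    intro w hw
    have := hA w hw
    rw [haz] at this
    linarith
  have hvi : ∀ k, v i ≤ uk k i := by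
    intro k
    have h1 := hmax k v hv
    rw [dotp_two i j hij, dotp_two i j hij] at h1
    have h2 : uk k j ≤ u j := hwj (uk k) (huk k)
    have h3 : u j ≤ v j := hle j
    have h4 := hφ k i
    have h5 := hφ k j
    nlinarith
  have : v i ≤ u i := ge_of_tendsto' (hcoord i) hvi
  linarith

theorem stmt16 (U : Set (Fin 2 → ℝ)) (hcl : IsClosed U) (hcv : Convex ℝ U)
    (uk : ℕ → (Fin 2 → ℝ)) (huk : ∀ k, uk k ∈ U)
    (φ : ℕ → (Fin 2 → ℝ)) (hφ : ∀ k, ∀ i, 0 < φ k i)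
    (hmax : ∀ k, ∀ v ∈ U, dotp (φ k) v ≤ dotp (φ k) (uk k))
    (u : Fin 2 → ℝ) (huU : u ∈ U)
    (hlim : Filter.Tendsto uk Filter.atTop (nhds u)) :
    Pareto U u := by
  refine ⟨huU, fun v hv hle => ?_⟩
  funext m
  have h01 : (0 : Fin 2) ≠ 1 := by decide
  have h10 : (1 : Fin 2) ≠ 0 := by decide
  fin_cases m
  · exact le_antisymm (coord_le U uk huk φ hφ hmax u huU hlim 0 1 h01 v hv hle) (hle 0)
  · exact le_antisymm (coord_le U uk huk φ hφ hmax u huU hlim 1 0 h10 v hv hle) (hle 1)
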